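/- (Inverse property) Let 0 < a, 0 < α < 1 and β > 0, and let f be a continuous function on [a,∞) such that its M-integral exists on [a, t]. Then for every t > a, the local M-derivative of the function F(t) = _M I_a^{α,β} f(t) exists and 𝒟_M^{α,β}(_M I_a^{α,β} f)(t) = f(t). -/

import Mathlib

open Filter Topology MeasureTheory Set

/-- One-parameter Mittag-Leffler function `E_β(x) = ∑_{k=0}^∞ x^k / Γ(βk+1)`. -/
noncomputable def mittagLeffler (β x : ℝ) : ℝ :=
  ∑' k : ℕ, x ^ k / Real.Gamma (β * k + 1)

/-- `f` has local M-derivative `L` of order `α` with parameter `β` at `t`, i.e.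
`lim_{ε→0} (f (t · E_β (ε t^{-α})) - f t)/ε = L`. -/
def HasLocalMDerivAt (α β : ℝ) (f : ℝ → ℝ) (t L : ℝ) : Prop :=
  Tendsto (fun ε : ℝ => (f (t * mittagLeffler β (ε * t ^ (-α))) - f t) / ε)
    (𝓝[≠] (0 : ℝ)) (𝓝 L)

/-- The M-integral `_M I_a^{α,β} f(t) = Γ(β+1) ∫_a^t f(x)/x^{1-α} dx`. -/
noncomputable def MIntegral (α β a t : ℝ) (f : ℝ → ℝ) : ℝ :=
  Real.Gamma (β + 1) * ∫ x in a..t, f x / x ^ (1 - α)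

-- lower bound for Gamma on [1, ∞)
lemma gamma_lower {y : ℝ} (hy : 1 ≤ y) : Real.exp (-1) ≤ Real.Gamma y := by
  have hy0 : 0 < y := lt_of_lt_of_le one_pos hy
  rw [Real.Gamma_eq_integral hy0]
  have hInt0 : IntegrableOn (fun x : ℝ => Real.exp (-x) * x ^ (y - 1)) (Ioi 0) :=
    Real.GammaIntegral_convergent hy0
  have hInt1 : IntegrableOn (fun x : ℝ => Real.exp (-x) * x ^ (y - 1)) (Ioi 1) :=
    hInt0.mono_set (Ioi_subset_Ioi zero_le_one)
  have hexp : IntegrableOn (fun x : ℝ => Real.exp (-x)) (Ioi 1) := by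
    have := exp_neg_integrableOn_Ioi (1 : ℝ) (b := 1) one_pos
    simpa using this
  have h1 : (∫ x in Ioi (1:ℝ), Real.exp (-x)) ≤
      ∫ x in Ioi (1:ℝ), Real.exp (-x) * x ^ (y - 1) := by
    apply setIntegral_mono_on hexp hInt1 measurableSet_Ioi
    intro x hx
    have hx1 : (1:ℝ) ≤ x := le_of_lt hx
    have hx0 : (0:ℝ) < x := lt_of_lt_of_le one_pos hx1
    have hr : 1 ≤ x ^ (y - 1) := Real.one_le_rpow hx1 (by linarith)
    nlinarith [Real.exp_pos (-x)]
  have h2 : (∫ x in Ioi (1:ℝ), Real.exp (-x) * x ^ (y - 1)) ≤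
      ∫ x in Ioi (0:ℝ), Real.exp (-x) * x ^ (y - 1) := by
    apply setIntegral_mono_set hInt0
    · filter_upwards [self_mem_ae_restrict measurableSet_Ioi] with x hx
      have hx0 : (0:ℝ) < x := hx
      positivity
    · exact HasSubset.Subset.eventuallyLE (Ioi_subset_Ioi zero_le_one)
  calc Real.exp (-1) = ∫ x in Ioi (1:ℝ), Real.exp (-x) := (integral_exp_neg_Ioi 1).symm
    _ ≤ _ := le_trans h1 h2

lemma ml_term_bound (β : ℝ) (hβ : 0 < β) (x : ℝ) (k : ℕ) :
    ‖x ^ k / Real.Gamma (β * k + 1)‖ ≤ Real.exp 1 * |x| ^ k := by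
  have hk0 : (0:ℝ) ≤ β * k := by positivity
  have h1 : (1:ℝ) ≤ β * k + 1 := by linarith
  have hΓ : Real.exp (-1) ≤ Real.Gamma (β * k + 1) := gamma_lower h1
  have hΓ0 : 0 < Real.Gamma (β * k + 1) := lt_of_lt_of_le (Real.exp_pos _) hΓ
  rw [Real.norm_eq_abs, abs_div, abs_pow, abs_of_pos hΓ0, div_le_iff₀ hΓ0]
  have he : Real.exp 1 * Real.exp (-1) = 1 := by
    rw [← Real.exp_add]; norm_num
  nlinarith [pow_nonneg (abs_nonneg x) k, Real.exp_pos 1,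
    mul_le_mul_of_nonneg_left hΓ (Real.exp_pos 1).le]

lemma ml_summable {β : ℝ} (hβ : 0 < β) {x : ℝ} (hx : |x| < 1) :
    Summable (fun k : ℕ => x ^ k / Real.Gamma (β * k + 1)) := by
  apply Summable.of_norm_bounded (g := fun k : ℕ => Real.exp 1 * |x| ^ k)
  · exact (summable_geometric_of_lt_one (abs_nonneg x) hx).mul_left _
  · exact ml_term_bound β hβ x

lemma ml_zero {β : ℝ} (hβ : 0 < β) : mittagLeffler β 0 = 1 := by
  rw [mittagLeffler]
  rw [tsum_eq_single 0 (by intro k hk; simp [zero_pow hk])]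
  simp [Real.Gamma_one]

lemma ml_expansion {β : ℝ} (hβ : 0 < β) {x : ℝ} (hx : |x| ≤ 1/2) :
    |mittagLeffler β x - 1 - x / Real.Gamma (β + 1)| ≤ (2 * Real.exp 1) * x ^ 2 := by
  have hx1 : |x| < 1 := lt_of_le_of_lt hx (by norm_num)
  set g : ℕ → ℝ := fun k => x ^ k / Real.Gamma (β * k + 1) with hg
  have hs : Summable g := ml_summable hβ hx1
  have hs1 : Summable (fun k => g (k + 1)) := (summable_nat_add_iff 1).mpr hs
  have hs2 : Summable (fun k => g (k + 2)) := by
    have := (summable_nat_add_iff 1).mpr hs1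
    simpa [add_assoc] using this
  have h0 : g 0 = 1 := by simp [hg, Real.Gamma_one]
  have h1 : g 1 = x / Real.Gamma (β + 1) := by simp [hg]
  have hsplit : mittagLeffler β x = 1 + x / Real.Gamma (β + 1) + ∑' k, g (k + 2) := by
    rw [mittagLeffler, ← hg, Summable.tsum_eq_zero_add hs, Summable.tsum_eq_zero_add hs1, h0, h1]
    have : ∀ k : ℕ, g (k + 1 + 1) = g (k + 2) := fun k => by ring_nf
    rw [tsum_congr this]; ring
  rw [hsplit]
  have key : |∑' k, g (k + 2)| ≤ (2 * Real.exp 1) * x ^ 2 := by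
    have hgeo : Summable (fun k : ℕ => Real.exp 1 * |x| ^ (k + 2)) := by
      have : Summable (fun k : ℕ => |x| ^ (k + 2)) := by
        have := (summable_nat_add_iff 2).mpr (summable_geometric_of_lt_one (abs_nonneg x) hx1)
        exact this
      exact this.mul_left _
    have hbound : ∀ k : ℕ, ‖g (k + 2)‖ ≤ Real.exp 1 * |x| ^ (k + 2) := by
      intro k
      have := ml_term_bound β hβ x (k + 2)
      simpa [hg] using this
    have hsn : Summable (fun k => ‖g (k + 2)‖) :=
      Summable.of_nonneg_of_le (fun k => norm_nonneg _) hbound hgeo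
    calc |∑' k, g (k + 2)| ≤ ∑' k, ‖g (k + 2)‖ := norm_tsum_le_tsum_norm hsn
      _ ≤ ∑' k, Real.exp 1 * |x| ^ (k + 2) := Summable.tsum_le_tsum hbound hsn hgeo
      _ = Real.exp 1 * |x| ^ 2 * ∑' k : ℕ, |x| ^ k := by
          rw [← tsum_mul_left]
          congr 1; funext k
          ring
      _ = Real.exp 1 * |x| ^ 2 * (1 - |x|)⁻¹ := by
          rw [tsum_geometric_of_lt_one (abs_nonneg x) hx1]
      _ ≤ (2 * Real.exp 1) * x ^ 2 := by
          have h2 : (1 - |x|)⁻¹ ≤ 2 := by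
            rw [inv_le_comm₀ (by linarith) (by norm_num)]
            linarith
          calc Real.exp 1 * |x| ^ 2 * (1 - |x|)⁻¹ ≤ Real.exp 1 * |x| ^ 2 * 2 := by
                apply mul_le_mul_of_nonneg_left h2; positivity
            _ = (2 * Real.exp 1) * x ^ 2 := by rw [sq_abs]; ring
  calc |1 + x / Real.Gamma (β + 1) + ∑' k, g (k+2) - 1 - x / Real.Gamma (β + 1)|
      = |∑' k, g (k + 2)| := by congr 1; ring
    _ ≤ _ := key

lemma hasDerivAt_ml_zero {β : ℝ} (hβ : 0 < β) :
    HasDerivAt (mittagLeffler β) (Real.Gamma (β + 1))⁻¹ 0 := by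
  rw [hasDerivAt_iff_isLittleO]
  have hO : (fun x : ℝ => mittagLeffler β x - mittagLeffler β 0 - (x - 0) • (Real.Gamma (β + 1))⁻¹)
      =O[𝓝 0] (fun x : ℝ => x ^ 2) := by
    apply Asymptotics.IsBigO.of_bound (2 * Real.exp 1)
    have hev : ∀ᶠ x : ℝ in 𝓝 0, |x| ≤ 1/2 := by
      have := Metric.closedBall_mem_nhds (0:ℝ) (by norm_num : (0:ℝ) < 1/2)
      filter_upwards [this] with x hx
      simpa [Real.dist_eq] using hx
    filter_upwards [hev] with x hx
    have := ml_expansion hβ hx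
    rw [ml_zero hβ]
    simp only [sub_zero, smul_eq_mul, Real.norm_eq_abs]
    rw [abs_pow, sq_abs]
    calc |mittagLeffler β x - 1 - x * (Real.Gamma (β + 1))⁻¹|
        = |mittagLeffler β x - 1 - x / Real.Gamma (β + 1)| := by rw [div_eq_mul_inv]
      _ ≤ (2 * Real.exp 1) * x ^ 2 := this
  exact hO.trans_isLittleO (by simpa using Asymptotics.isLittleO_pow_id (𝕜 := ℝ) one_lt_two)

/-- Inverse property: `𝒟_M^{α,β} (_M I_a^{α,β} f)(t) = f(t)` for `t > a`. -/
theorem stmt15 (a α β : ℝ) (ha : 0 < a) (hα0 : 0 < α) (hα1 : α < 1) (hβ : 0 < β)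
    (f : ℝ → ℝ) (hf : ContinuousOn f (Set.Ici a))
    (t : ℝ) (ht : a < t)
    (hint : IntervalIntegrable (fun x => f x / x ^ (1 - α)) MeasureTheory.volume a t) :
    HasLocalMDerivAt α β (fun s => MIntegral α β a s f) t (f t) := by
  have ht0 : 0 < t := ha.trans ht
  have hΓ : 0 < Real.Gamma (β + 1) := Real.Gamma_pos_of_pos (by linarith)
  have htp : 0 < t ^ (1 - α) := Real.rpow_pos_of_pos ht0 _
  -- derivative of inner function s(ε) = t * E_β(ε t^{-α})
  have hlin : HasDerivAt (fun ε : ℝ => ε * t ^ (-α)) (t ^ (-α)) 0 :=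
    hasDerivAt_mul_const _
  have hML : HasDerivAt (mittagLeffler β) (Real.Gamma (β + 1))⁻¹ ((0:ℝ) * t ^ (-α)) := by
    rw [zero_mul]; exact hasDerivAt_ml_zero hβ
  have hcomp1 : HasDerivAt (fun ε : ℝ => mittagLeffler β (ε * t ^ (-α)))
      ((Real.Gamma (β + 1))⁻¹ * t ^ (-α)) 0 := HasDerivAt.comp (h := fun ε : ℝ => ε * t ^ (-α)) 0 hML hlin
  have hs : HasDerivAt (fun ε : ℝ => t * mittagLeffler β (ε * t ^ (-α)))
      (t * ((Real.Gamma (β + 1))⁻¹ * t ^ (-α))) 0 := hcomp1.const_mul t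
  -- derivative of F
  have hfc : ContinuousAt f t := hf.continuousAt (Ici_mem_nhds ht)
  have hFc : ContinuousAt (fun x => f x / x ^ (1 - α)) t :=
    ContinuousAt.div hfc (Real.continuousAt_rpow_const t _ (Or.inl ht0.ne')) htp.ne'
  have hmeas : StronglyMeasurableAtFilter (fun x => f x / x ^ (1 - α))
      (𝓝 t) MeasureTheory.volume := by
    apply ContinuousAt.stronglyMeasurableAtFilter (isOpen_Ioi (a := a))
    · intro x hx
      have hx0 : 0 < x := ha.trans hx
      exact ContinuousAt.div (hf.continuousAt (Ici_mem_nhds hx))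
        (Real.continuousAt_rpow_const x _ (Or.inl hx0.ne'))
        (Real.rpow_pos_of_pos hx0 _).ne'
    · exact ht
  have hF0 : HasDerivAt (fun u => ∫ x in a..u, f x / x ^ (1 - α)) (f t / t ^ (1 - α)) t :=
    intervalIntegral.integral_hasDerivAt_right hint hmeas hFc
  have hF : HasDerivAt (fun u => MIntegral α β a u f)
      (Real.Gamma (β + 1) * (f t / t ^ (1 - α))) t := hF0.const_mul _
  -- compose
  have hs0 : t * mittagLeffler β ((0:ℝ) * t ^ (-α)) = t := by
    rw [zero_mul, ml_zero hβ, mul_one]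
  have hF' : HasDerivAt (fun u => MIntegral α β a u f)
      (Real.Gamma (β + 1) * (f t / t ^ (1 - α)))
      ((fun ε : ℝ => t * mittagLeffler β (ε * t ^ (-α))) 0) := by
    simpa only [hs0] using hF
  have hg := hF'.comp 0 hs
  -- simplify the derivative value
  have hpow : t * t ^ (-α) = t ^ (1 - α) := by
    rw [show (1:ℝ) - α = 1 + (-α) by ring, Real.rpow_add ht0, Real.rpow_one]
  have hval : Real.Gamma (β + 1) * (f t / t ^ (1 - α)) *
      (t * ((Real.Gamma (β + 1))⁻¹ * t ^ (-α))) = f t := by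
    have h1 : t * ((Real.Gamma (β + 1))⁻¹ * t ^ (-α)) =
        (Real.Gamma (β + 1))⁻¹ * t ^ (1 - α) := by rw [← hpow]; ring
    rw [h1]
    field_simp
  rw [hval] at hg
  -- convert HasDerivAt into the slope limit
  have hslope := hasDerivAt_iff_tendsto_slope.mp hg
  rw [HasLocalMDerivAt]
  apply hslope.congr
  intro ε
  simp only [slope_def_field, Function.comp_apply, hs0, sub_zero]
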